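/- Let Ω₂ := (ℓ, ℓ+δ) × (0,π) with 0 ≤ ℓ < ℓ+δ ≤ π, and φ_n(x) = (2/π) sin(n₁x₁) sin(n₂x₂) for n ∈ (ℕ⁺)². Then there exists c* > 0 such that for all n, ∫_{Ω₂} |∇φ_n(x)|² dx ≥ c*·δ·(n₁² + n₂²). -/

import Mathlib

open Real intervalIntegral

lemma my_int_cos_sq (k a b : ℝ) (hk : k ≠ 0) :
    ∫ x in a..b, Real.cos (k * x) ^ 2
      = (b - a) / 2 + (Real.cos (k*b) * Real.sin (k*b) - Real.cos (k*a) * Real.sin (k*a)) / (2*k) := by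
  rw [intervalIntegral.integral_comp_mul_left (fun x => Real.cos x ^ 2) hk, integral_cos_sq]
  field_simp
  ring_nf
  field_simp
  ring

lemma my_int_sin_sq (k a b : ℝ) (hk : k ≠ 0) :
    ∫ x in a..b, Real.sin (k * x) ^ 2
      = (b - a) / 2 - (Real.cos (k*b) * Real.sin (k*b) - Real.cos (k*a) * Real.sin (k*a)) / (2*k) := by
  rw [intervalIntegral.integral_comp_mul_left (fun x => Real.sin x ^ 2) hk, integral_sin_sq]
  field_simp
  ring_nf
  field_simp
  ring

lemma my_prod_to_sin (a' b' : ℝ) :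
    Real.cos b' * Real.sin b' - Real.cos a' * Real.sin a'
      = Real.sin (b' - a') * Real.cos (b' + a') := by
  have h1 := Real.sin_two_mul a'
  have h2 := Real.sin_two_mul b'
  have h3 := Real.sin_sub_sin (2*b') (2*a')
  rw [show (2*b' - 2*a')/2 = b' - a' by ring, show (2*b' + 2*a')/2 = b' + a' by ring] at h3
  linarith

lemma my_inner_sin (m : ℕ+) : ∫ x in (0:ℝ)..π, Real.sin ((m:ℝ)*x) ^ 2 = π / 2 := by
  have hm : ((m:ℝ)) ≠ 0 := by positivity
  rw [my_int_sin_sq _ _ _ hm]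
  have : Real.sin ((m:ℝ) * π) = 0 := by
    have := Real.sin_nat_mul_pi (m : ℕ)
    simpa using this
  simp [this]

lemma my_inner_cos (m : ℕ+) : ∫ x in (0:ℝ)..π, Real.cos ((m:ℝ)*x) ^ 2 = π / 2 := by
  have hm : ((m:ℝ)) ≠ 0 := by positivity
  rw [my_int_cos_sq _ _ _ hm]
  have : Real.sin ((m:ℝ) * π) = 0 := by
    have := Real.sin_nat_mul_pi (m : ℕ)
    simpa using this
  simp [this]

lemma my_half_bound (δ : ℝ) (hδ : 0 < δ) (hπ2 : δ ≤ π) (m : ℝ) (hm : 1 ≤ m) (e : ℝ)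
    (he : |e| ≤ |Real.sin (m*δ)|) :
    min (δ/4) (δ*(δ - Real.sin δ)/4) ≤ δ/2 + e/(2*m) := by
  have hm0 : (0:ℝ) < m := lt_of_lt_of_le one_pos hm
  have hK0 : 0 ≤ min (δ/4) (δ*(δ - Real.sin δ)/4) := by
    have h1 : Real.sin δ < δ := Real.sin_lt hδ
    exact le_min (by positivity) (by nlinarith)
  set K := min (δ/4) (δ*(δ - Real.sin δ)/4) with hKdef
  have habs : |e|/(2*m) ≤ δ/2 - K := by
    rw [div_le_iff₀ (by positivity)]
    rcases le_or_gt 2 (m*δ) with h2 | h2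
    · have h1 : |e| ≤ 1 := he.trans (abs_sin_le_one _)
      have hKle : K ≤ δ/4 := min_le_left _ _
      nlinarith
    · have hKle : K ≤ δ*(δ - Real.sin δ)/4 := min_le_right _ _
      have hsd : Real.sin δ < δ := Real.sin_lt hδ
      have hu0 : 0 ≤ (m*δ - δ)/2 := by nlinarith
      have hu1 : (m*δ - δ)/2 < 1 := by nlinarith
      have hsin_u : Real.sin ((m*δ - δ)/2) ≤ (m*δ - δ)/2 := Real.sin_le hu0
      have hsin_u0 : 0 ≤ Real.sin ((m*δ - δ)/2) :=
        Real.sin_nonneg_of_nonneg_of_le_pi hu0 (le_trans hu1.le (by nlinarith [Real.pi_gt_three]))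
      have hpos : 0 ≤ Real.sin (m*δ) := by
        apply Real.sin_nonneg_of_nonneg_of_le_pi (by positivity)
        nlinarith [Real.pi_gt_three]
      have hlip : Real.sin (m*δ) ≤ Real.sin δ + (m*δ - δ) := by
        have h3 := Real.sin_sub_sin (m*δ) δ
        have hc1 : Real.cos ((m*δ + δ)/2) ≤ 1 := Real.cos_le_one _
        have hc2 : -1 ≤ Real.cos ((m*δ + δ)/2) := Real.neg_one_le_cos _
        nlinarith
      have he2 : |e| ≤ Real.sin δ + (m*δ - δ) := by
        rw [abs_of_nonneg hpos] at he
        linarith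
      nlinarith [mul_le_mul_of_nonneg_left hKle (le_of_lt hm0)]
  have h1 : -(|e|/(2*m)) ≤ e/(2*m) := by
    rw [← neg_div]
    gcongr
    exact neg_abs_le e
  linarith

lemma my_inner_eval (n₁ n₂ : ℕ+) (x₁ : ℝ) :
    (∫ x₂ in (0:ℝ)..π,
      ((2 / π) * (n₁ : ℝ) * Real.cos ((n₁ : ℝ) * x₁) * Real.sin ((n₂ : ℝ) * x₂)) ^ 2 +
        ((2 / π) * (n₂ : ℝ) * Real.sin ((n₁ : ℝ) * x₁) * Real.cos ((n₂ : ℝ) * x₂)) ^ 2)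
      = (2/π) * ((n₁:ℝ)^2 * Real.cos ((n₁:ℝ)*x₁)^2 + (n₂:ℝ)^2 * Real.sin ((n₁:ℝ)*x₁)^2) := by
  have hrw : ∀ x₂ : ℝ,
      ((2 / π) * (n₁ : ℝ) * Real.cos ((n₁ : ℝ) * x₁) * Real.sin ((n₂ : ℝ) * x₂)) ^ 2 +
        ((2 / π) * (n₂ : ℝ) * Real.sin ((n₁ : ℝ) * x₁) * Real.cos ((n₂ : ℝ) * x₂)) ^ 2
      = ((2 / π) * (n₁ : ℝ) * Real.cos ((n₁ : ℝ) * x₁)) ^ 2 * Real.sin ((n₂ : ℝ) * x₂) ^ 2 +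
        ((2 / π) * (n₂ : ℝ) * Real.sin ((n₁ : ℝ) * x₁)) ^ 2 * Real.cos ((n₂ : ℝ) * x₂) ^ 2 := by
    intro x₂; ring
  simp only [hrw]
  rw [intervalIntegral.integral_add
      ((Continuous.intervalIntegrable (by fun_prop) _ _))
      ((Continuous.intervalIntegrable (by fun_prop) _ _)),
    intervalIntegral.integral_const_mul, intervalIntegral.integral_const_mul,
    my_inner_sin, my_inner_cos]
  have hπ := Real.pi_ne_zero
  field_simp

open Real in
theorem stmt_14 (ℓ δ : ℝ) (h0 : 0 ≤ ℓ) (hδ : 0 < δ) (hπ : ℓ + δ ≤ π) :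
    ∃ c > (0 : ℝ), ∀ n : ℕ+ × ℕ+,
      c * δ * ((n.1 : ℝ) ^ 2 + (n.2 : ℝ) ^ 2) ≤
        ∫ x₁ in ℓ..(ℓ + δ), ∫ x₂ in (0 : ℝ)..π,
          ((2 / π) * (n.1 : ℝ) * Real.cos ((n.1 : ℝ) * x₁) * Real.sin ((n.2 : ℝ) * x₂)) ^ 2 +
            ((2 / π) * (n.2 : ℝ) * Real.sin ((n.1 : ℝ) * x₁) * Real.cos ((n.2 : ℝ) * x₂)) ^ 2 := by
  have hπ0 : (0:ℝ) < π := Real.pi_pos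
  have hδπ : δ ≤ π := by linarith
  have hsd : Real.sin δ < δ := Real.sin_lt hδ
  set K := min (δ/4) (δ*(δ - Real.sin δ)/4) with hKdef
  have hK0 : 0 < K := lt_min (by positivity) (by nlinarith)
  refine ⟨2*K/(π*δ), by positivity, ?_⟩
  intro n
  set m := ((n.1 : ℕ+) : ℝ) with hmdef
  have hm1 : (1:ℝ) ≤ m := by rw [hmdef]; exact_mod_cast n.1.one_le
  have hm0 : m ≠ 0 := by positivity
  -- evaluate the inner integral
  simp only [hmdef, my_inner_eval n.1 n.2]
  rw [intervalIntegral.integral_const_mul,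
    intervalIntegral.integral_add
      ((Continuous.intervalIntegrable (by fun_prop) _ _))
      ((Continuous.intervalIntegrable (by fun_prop) _ _)),
    intervalIntegral.integral_const_mul, intervalIntegral.integral_const_mul]
  -- bound the two x₁-integrals from below by K
  set e := Real.sin (m*δ) * Real.cos (m*(2*ℓ+δ)) with hedef
  have hprod : Real.cos (m*(ℓ+δ)) * Real.sin (m*(ℓ+δ)) - Real.cos (m*ℓ) * Real.sin (m*ℓ) = e := by
    rw [my_prod_to_sin (m*ℓ) (m*(ℓ+δ)), hedef,
      show m*(ℓ+δ) - m*ℓ = m*δ by ring, show m*(ℓ+δ) + m*ℓ = m*(2*ℓ+δ) by ring]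
  have habs : |e| ≤ |Real.sin (m*δ)| := by
    rw [hedef, abs_mul]
    exact mul_le_of_le_one_right (abs_nonneg _) (Real.abs_cos_le_one _)
  have habs' : |(-e)| ≤ |Real.sin (m*δ)| := by rwa [abs_neg]
  have hC : K ≤ ∫ x in ℓ..(ℓ+δ), Real.cos (m*x)^2 := by
    rw [my_int_cos_sq m ℓ (ℓ+δ) hm0, hprod]
    have := my_half_bound δ hδ hδπ m hm1 e habs
    rw [← hKdef] at this
    linarith
  have hS : K ≤ ∫ x in ℓ..(ℓ+δ), Real.sin (m*x)^2 := by
    rw [my_int_sin_sq m ℓ (ℓ+δ) hm0, hprod]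
    have := my_half_bound δ hδ hδπ m hm1 (-e) habs'
    rw [← hKdef] at this
    rw [neg_div] at this
    linarith
  have hc : 2*K/(π*δ)*δ = 2/π*K := by field_simp
  rw [hc, mul_assoc]
  rw [← hmdef]
  refine mul_le_mul_of_nonneg_left ?_ (by positivity)
  nlinarith [mul_le_mul_of_nonneg_left hC (sq_nonneg m),
    mul_le_mul_of_nonneg_left hS (sq_nonneg ((n.2 : ℕ+) : ℝ))]
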